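/- Let A₁, A₂ ∈ M_n(ℂ) be nonzero. Then {B : A₁ ⊥ B} ⊆ {B : A₂ ⊥ B} if and only if M₀(A₁) ⊆ M₀(A₂) and there exists a nonzero α ∈ ℂ such that A₁u = α·A₂u for all u ∈ M₀(A₁). -/

import Mathlib

open scoped Matrix.Norms.L2Operator Matrix InnerProductSpace

/-- Action of a complex matrix on Euclidean space. -/
noncomputable def mulE {n : ℕ} (A : Matrix (Fin n) (Fin n) ℂ)
    (u : EuclideanSpace ℂ (Fin n)) : EuclideanSpace ℂ (Fin n) :=
  Matrix.toEuclideanCLM (𝕜 := ℂ) A u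

/-- The set of norm-attaining vectors of `A`. -/
noncomputable def M₀ {n : ℕ} (A : Matrix (Fin n) (Fin n) ℂ) :
    Set (EuclideanSpace ℂ (Fin n)) :=
  {u | ‖mulE A u‖ = ‖A‖ * ‖u‖}

/-- Birkhoff–James orthogonality in `M_n(ℂ)` with the operator norm. -/
noncomputable def BJ {n : ℕ} (A B : Matrix (Fin n) (Fin n) ℂ) : Prop :=
  ∀ c : ℂ, ‖A‖ ≤ ‖A + c • B‖

/-- The outgoing BJ neighborhood `A^⊥`. -/
noncomputable def orthSet {n : ℕ} (A : Matrix (Fin n) (Fin n) ℂ) :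
    Set (Matrix (Fin n) (Fin n) ℂ) :=
  {B | BJ A B}

section basic
variable {n : ℕ} (A B : Matrix (Fin n) (Fin n) ℂ)

lemma mulE_add (u : EuclideanSpace ℂ (Fin n)) : mulE (A + B) u = mulE A u + mulE B u := by
  simp [mulE, map_add]

lemma mulE_smul (c : ℂ) (u : EuclideanSpace ℂ (Fin n)) : mulE (c • B) u = c • mulE B u := by
  simp [mulE, map_smul]

lemma mulE_mul (u : EuclideanSpace ℂ (Fin n)) : mulE (A * B) u = mulE A (mulE B u) := by
  simp [mulE, map_mul]

lemma mulE_apply_add (u v : EuclideanSpace ℂ (Fin n)) :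
    mulE A (u + v) = mulE A u + mulE A v := by simp [mulE]

lemma mulE_apply_smul (c : ℂ) (u : EuclideanSpace ℂ (Fin n)) :
    mulE A (c • u) = c • mulE A u := by simp [mulE]

lemma norm_mulE_le (u : EuclideanSpace ℂ (Fin n)) : ‖mulE A u‖ ≤ ‖A‖ * ‖u‖ := by
  rw [Matrix.cstar_norm_def]
  exact (Matrix.toEuclideanCLM (𝕜 := ℂ) A).le_opNorm u

lemma inner_mulE_left (u v : EuclideanSpace ℂ (Fin n)) :
    ⟪mulE A u, v⟫_ℂ = ⟪u, mulE Aᴴ v⟫_ℂ := by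
  have : Matrix.toEuclideanCLM (𝕜 := ℂ) Aᴴ
      = ContinuousLinearMap.adjoint (Matrix.toEuclideanCLM (𝕜 := ℂ) A) := by
    rw [← ContinuousLinearMap.star_eq_adjoint, ← map_star]
    rfl
  rw [mulE, mulE, this, ContinuousLinearMap.adjoint_inner_right]

lemma exists_unit_attain (hn : n ≠ 0) :
    ∃ u : EuclideanSpace ℂ (Fin n), ‖u‖ = 1 ∧ ‖mulE A u‖ = ‖A‖ := by
  have hne : (Metric.sphere (0 : EuclideanSpace ℂ (Fin n)) 1).Nonempty := by
    have : Nontrivial (EuclideanSpace ℂ (Fin n)) := by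
      have : Nonempty (Fin n) := ⟨⟨0, Nat.pos_of_ne_zero hn⟩⟩
      infer_instance
    exact NormedSpace.sphere_nonempty.mpr zero_le_one
  have hc : IsCompact (Metric.sphere (0 : EuclideanSpace ℂ (Fin n)) 1) :=
    isCompact_sphere _ _
  have hcont : Continuous fun v : EuclideanSpace ℂ (Fin n) => ‖mulE A v‖ :=
    ((Matrix.toEuclideanCLM (𝕜 := ℂ) A).continuous.norm)
  obtain ⟨u, hu, hmax⟩ := hc.exists_isMaxOn hne hcont.continuousOn
  rw [mem_sphere_zero_iff_norm] at hu
  refine ⟨u, hu, le_antisymm (by simpa [hu] using norm_mulE_le A u) ?_⟩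
  rw [Matrix.cstar_norm_def]
  apply ContinuousLinearMap.opNorm_le_bound _ (norm_nonneg _)
  intro x
  rcases eq_or_ne x 0 with rfl | hx
  · simp
  · have hxs : (‖x‖⁻¹ : ℂ) • x ∈ Metric.sphere (0 : EuclideanSpace ℂ (Fin n)) 1 := by
      simp [norm_smul, norm_ne_zero_iff.mpr hx, inv_mul_cancel₀]
    have h2 := hmax hxs
    simp only [Set.mem_setOf_eq, mulE_apply_smul, norm_smul, norm_inv,
      Complex.norm_real, Real.norm_eq_abs, abs_of_nonneg (norm_nonneg x)] at h2
    have hx' : (0:ℝ) < ‖x‖ := norm_pos_iff.mpr hx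
    show ‖mulE A x‖ ≤ ‖mulE A u‖ * ‖x‖
    rw [inv_mul_le_iff₀ hx'] at h2
    linarith [h2]

lemma re_inner_self (x : EuclideanSpace ℂ (Fin n)) : (⟪x, x⟫_ℂ).re = ‖x‖ ^ 2 := by
  rw [inner_self_eq_norm_sq_to_K (𝕜 := ℂ)]
  norm_cast

lemma mem_M₀_iff (u : EuclideanSpace ℂ (Fin n)) :
    u ∈ M₀ A ↔ mulE Aᴴ (mulE A u) = ((‖A‖ ^ 2 : ℝ) : ℂ) • u := by
  have hadj : ∀ x y : EuclideanSpace ℂ (Fin n),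
      ⟪mulE Aᴴ (mulE A x), y⟫_ℂ = ⟪mulE A x, mulE A y⟫_ℂ := by
    intro x y
    have : Matrix.toEuclideanCLM (𝕜 := ℂ) Aᴴ
        = ContinuousLinearMap.adjoint (Matrix.toEuclideanCLM (𝕜 := ℂ) A) := by
      rw [← ContinuousLinearMap.star_eq_adjoint, ← map_star]; rfl
    rw [mulE, mulE, mulE, this, ContinuousLinearMap.adjoint_inner_left]
  constructor
  · intro hu
    set M := ‖A‖ with hM
    set v : EuclideanSpace ℂ (Fin n) := ((M ^ 2 : ℝ) : ℂ) • u - mulE Aᴴ (mulE A u) with hv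
    have hq : ∀ x : EuclideanSpace ℂ (Fin n), 0 ≤ M ^ 2 * ‖x‖ ^ 2 - ‖mulE A x‖ ^ 2 := by
      intro x
      have h := norm_mulE_le A x
      nlinarith [norm_nonneg (mulE A x), norm_nonneg x, mul_nonneg (norm_nonneg A) (norm_nonneg x)]
    have hb : Complex.re ⟪v, v⟫_ℂ = M ^ 2 * Complex.re ⟪u, v⟫_ℂ
        - Complex.re ⟪mulE A u, mulE A v⟫_ℂ := by
      rw [← hadj]
      have : (⟪v, v⟫_ℂ : ℂ) = ((M ^ 2 : ℝ) : ℂ) * ⟪u, v⟫_ℂ - ⟪mulE Aᴴ (mulE A u), v⟫_ℂ := by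
        rw [hv]
        rw [inner_sub_left, inner_smul_left]
        simp only [Complex.conj_ofReal]
      rw [this, Complex.sub_re, Complex.re_ofReal_mul]
    set b : ℝ := Complex.re ⟪v, v⟫_ℂ with hbdef
    have hbnn : 0 ≤ b := by
      rw [hbdef, re_inner_self]; positivity
    set a : ℝ := M ^ 2 * ‖v‖ ^ 2 - ‖mulE A v‖ ^ 2 with ha
    have key : ∀ t : ℝ, 0 ≤ 2 * t * b + t ^ 2 * a := by
      intro t
      have h0 := hq (u + (t : ℂ) • v)
      have e1 : ‖u + (t : ℂ) • v‖ ^ 2 = ‖u‖ ^ 2 + 2 * (t * Complex.re ⟪u, v⟫_ℂ) + t ^ 2 * ‖v‖ ^ 2 := by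
        rw [norm_add_sq (𝕜 := ℂ)]
        rw [inner_smul_right]
        simp [norm_smul, Complex.re_ofReal_mul]
        rw [mul_pow, sq_abs]
      have e2 : ‖mulE A (u + (t : ℂ) • v)‖ ^ 2 = ‖mulE A u‖ ^ 2
          + 2 * (t * Complex.re ⟪mulE A u, mulE A v⟫_ℂ) + t ^ 2 * ‖mulE A v‖ ^ 2 := by
        rw [mulE_apply_add, mulE_apply_smul, norm_add_sq (𝕜 := ℂ), inner_smul_right]
        simp [norm_smul, Complex.re_ofReal_mul]
        rw [mul_pow, sq_abs]
      have hu2 : ‖mulE A u‖ ^ 2 = M ^ 2 * ‖u‖ ^ 2 := by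
        rw [M₀, Set.mem_setOf_eq] at hu
        rw [hu]; ring
      rw [e1, e2, hu2] at h0
      have hid : 2 * t * b + t ^ 2 * a
          = M ^ 2 * (‖u‖ ^ 2 + 2 * (t * Complex.re ⟪u, v⟫_ℂ) + t ^ 2 * ‖v‖ ^ 2)
            - (M ^ 2 * ‖u‖ ^ 2 + 2 * (t * Complex.re ⟪mulE A u, mulE A v⟫_ℂ)
              + t ^ 2 * ‖mulE A v‖ ^ 2) := by
        rw [hb, ha]; ring
      linarith [h0]
    have hb0 : b = 0 := by
      by_contra hbne
      have hbpos : 0 < b := lt_of_le_of_ne hbnn (Ne.symm hbne)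
      have hs : (0:ℝ) < b / (|a| + 1) := by positivity
      have h1 := key (-(b / (|a| + 1)))
      have haa : (0:ℝ) < |a| + 1 := by positivity
      have h2 : 2 * b ≤ (b / (|a| + 1)) * a := by nlinarith [h1, hs]
      rw [div_mul_eq_mul_div, le_div_iff₀ haa] at h2
      have h3 : b * a ≤ b * |a| := mul_le_mul_of_nonneg_left (le_abs_self a) hbpos.le
      nlinarith [mul_nonneg hbpos.le (abs_nonneg a)]
    have hveq : v = 0 := by
      have : ‖v‖ ^ 2 = 0 := by rw [← re_inner_self, ← hbdef, hb0]
      have : ‖v‖ = 0 := by nlinarith [norm_nonneg v]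
      exact norm_eq_zero.mp this
    rw [hv, sub_eq_zero] at hveq
    exact hveq.symm
  · intro h
    have hre : (⟪mulE A u, mulE A u⟫_ℂ).re = ‖A‖ ^ 2 * ‖u‖ ^ 2 := by
      rw [← hadj, h, inner_smul_left]
      rw [Complex.conj_ofReal, Complex.re_ofReal_mul, re_inner_self]
    have h2 : ‖mulE A u‖ ^ 2 = (‖A‖ * ‖u‖) ^ 2 := by
      rw [re_inner_self] at hre
      rw [hre]; ring
    show ‖mulE A u‖ = ‖A‖ * ‖u‖
    exact (sq_eq_sq₀ (norm_nonneg _) (by positivity)).mp h2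

lemma inner_mulE_memM₀ {u : EuclideanSpace ℂ (Fin n)} (hu : u ∈ M₀ A)
    (v : EuclideanSpace ℂ (Fin n)) :
    ⟪mulE A v, mulE A u⟫_ℂ = ((‖A‖ ^ 2 : ℝ) : ℂ) * ⟪v, u⟫_ℂ := by
  rw [inner_mulE_left, (mem_M₀_iff A u).mp hu, inner_smul_right]

lemma M₀_add_mem {u v : EuclideanSpace ℂ (Fin n)} (hu : u ∈ M₀ A) (hv : v ∈ M₀ A) :
    u + v ∈ M₀ A := by
  rw [mem_M₀_iff] at hu hv ⊢
  rw [mulE_apply_add, mulE_apply_add, hu, hv, smul_add]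

lemma M₀_smul_mem {u : EuclideanSpace ℂ (Fin n)} (c : ℂ) (hu : u ∈ M₀ A) :
    c • u ∈ M₀ A := by
  rw [mem_M₀_iff] at hu ⊢
  rw [mulE_apply_smul, mulE_apply_smul, hu, smul_comm]

lemma bj_of_exists {A B : Matrix (Fin n) (Fin n) ℂ}
    (h : ∃ u, ‖u‖ = 1 ∧ u ∈ M₀ A ∧ ⟪mulE A u, mulE B u⟫_ℂ = 0) : BJ A B := by
  obtain ⟨u, hu1, hu0, hperp⟩ := h
  intro c
  have he : mulE (A + c • B) u = mulE A u + c • mulE B u := by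
    rw [mulE_add, mulE_smul]
  have hsq : ‖mulE A u‖ ^ 2 ≤ ‖mulE (A + c • B) u‖ ^ 2 := by
    rw [he, norm_add_sq (𝕜 := ℂ), inner_smul_right, hperp]
    simp
  have h1 : ‖mulE A u‖ ≤ ‖mulE (A + c • B) u‖ := by
    nlinarith [norm_nonneg (mulE A u), norm_nonneg (mulE (A + c • B) u)]
  have h2 : ‖mulE (A + c • B) u‖ ≤ ‖A + c • B‖ := by
    simpa [hu1] using norm_mulE_le (A + c • B) u
  have h3 : ‖mulE A u‖ = ‖A‖ := by
    rw [M₀, Set.mem_setOf_eq] at hu0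
    rw [hu0, hu1, mul_one]
  linarith

lemma not_bj {A B : Matrix (Fin n) (Fin n) ℂ} (hA : A ≠ 0)
    (h : ∀ v, ‖v‖ = 1 → v ∈ M₀ A → 0 < (⟪mulE A v, mulE B v⟫_ℂ).re) : ¬ BJ A B := by
  intro hBJ
  have hn : n ≠ 0 := by
    rintro rfl
    exact hA (Subsingleton.elim _ _)
  set t : ℕ → ℝ := fun k => 1 / (k + 1) with ht
  have htpos : ∀ k, 0 < t k := by
    intro k; rw [ht]; positivity
  choose u hu1 hu2 using fun k =>
    exists_unit_attain (A + (-(t k : ℂ)) • B) hn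
  have hAle : ∀ k, ‖A‖ ≤ ‖mulE (A + (-(t k : ℂ)) • B) (u k)‖ := by
    intro k; rw [hu2 k]; exact hBJ _
  have hmem : ∀ k, u k ∈ Metric.sphere (0 : EuclideanSpace ℂ (Fin n)) 1 := by
    intro k; rw [mem_sphere_zero_iff_norm]; exact hu1 k
  obtain ⟨x, hx, φ, hφ, hconv⟩ := (isCompact_sphere (0 : EuclideanSpace ℂ (Fin n)) 1).tendsto_subseq hmem
  rw [mem_sphere_zero_iff_norm] at hx
  -- expansion facts
  have hBu : ∀ k, ‖mulE B (u k)‖ ≤ ‖B‖ := by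
    intro k
    simpa [hu1 k] using norm_mulE_le B (u k)
  have hAu : ∀ k, ‖mulE A (u k)‖ ≤ ‖A‖ := by
    intro k
    simpa [hu1 k] using norm_mulE_le A (u k)
  have hexp : ∀ k, ‖mulE (A + (-(t k : ℂ)) • B) (u k)‖ ^ 2
      = ‖mulE A (u k)‖ ^ 2 - 2 * (t k * (⟪mulE A (u k), mulE B (u k)⟫_ℂ).re)
        + t k ^ 2 * ‖mulE B (u k)‖ ^ 2 := by
    intro k
    have he : mulE (A + (-(t k : ℂ)) • B) (u k) = mulE A (u k) - (t k : ℂ) • mulE B (u k) := by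
      rw [mulE_add, mulE_smul, neg_smul, ← sub_eq_add_neg]
    rw [he, norm_sub_sq (𝕜 := ℂ), inner_smul_right]
    rw [norm_smul]
    simp only [RCLike.re_to_complex, Complex.re_ofReal_mul, Complex.norm_real, Real.norm_eq_abs]
    rw [mul_pow, sq_abs]
  have hnorm_smul : ∀ k, ‖(t k : ℂ) • mulE B (u k)‖ = t k * ‖mulE B (u k)‖ := by
    intro k
    rw [norm_smul, Complex.norm_real, Real.norm_eq_abs, abs_of_pos (htpos k)]
  have f1 : ∀ k, ‖A‖ - t k * ‖B‖ ≤ ‖mulE A (u k)‖ := by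
    intro k
    have he : mulE (A + (-(t k : ℂ)) • B) (u k) = mulE A (u k) - (t k : ℂ) • mulE B (u k) := by
      rw [mulE_add, mulE_smul, neg_smul, ← sub_eq_add_neg]
    have hck : ‖mulE (A + (-(t k : ℂ)) • B) (u k)‖
        ≤ ‖mulE A (u k)‖ + t k * ‖mulE B (u k)‖ := by
      rw [he, ← hnorm_smul k]
      exact norm_sub_le _ _
    have := hAle k
    have := hBu k
    have := (htpos k).le
    nlinarith
  have f2 : ∀ k, (⟪mulE A (u k), mulE B (u k)⟫_ℂ).re ≤ t k * ‖B‖ ^ 2 / 2 := by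
    intro k
    have h1 : ‖mulE A (u k)‖ ^ 2 ≤ ‖A‖ ^ 2 := by
      have := hAu k
      nlinarith [norm_nonneg (mulE A (u k)), norm_nonneg A]
    have h2 : ‖A‖ ^ 2 ≤ ‖mulE (A + (-(t k : ℂ)) • B) (u k)‖ ^ 2 := by
      have := hAle k
      nlinarith [norm_nonneg A]
    rw [hexp k] at h2
    have h3 : ‖mulE B (u k)‖ ^ 2 ≤ ‖B‖ ^ 2 := by
      have := hBu k
      nlinarith [norm_nonneg (mulE B (u k)), norm_nonneg B]
    have htk := htpos k
    have htk2 : t k ^ 2 = t k * t k := sq (t k) ▸ by ring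
    have htle : t k ≤ 1 := by
      rw [ht]
      simp only
      rw [div_le_one (by positivity)]
      linarith [Nat.cast_nonneg (α := ℝ) k]
    nlinarith [h1, h2, h3, htk]
  -- limits
  have htend : Filter.Tendsto (fun k => t (φ k)) Filter.atTop (nhds 0) :=
    tendsto_one_div_add_atTop_nhds_zero_nat.comp hφ.tendsto_atTop
  have hcontA : Continuous fun v : EuclideanSpace ℂ (Fin n) => ‖mulE A v‖ :=
    (Matrix.toEuclideanCLM (𝕜 := ℂ) A).continuous.norm
  have hg : Continuous fun v : EuclideanSpace ℂ (Fin n) => (⟪mulE A v, mulE B v⟫_ℂ).re :=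
    Complex.continuous_re.comp ((Matrix.toEuclideanCLM (𝕜 := ℂ) A).continuous.inner
      (Matrix.toEuclideanCLM (𝕜 := ℂ) B).continuous)
  have hxA : ‖A‖ ≤ ‖mulE A x‖ := by
    have l1 : Filter.Tendsto (fun k => ‖A‖ - t (φ k) * ‖B‖) Filter.atTop (nhds (‖A‖ - 0 * ‖B‖)) :=
      (tendsto_const_nhds.sub (htend.mul tendsto_const_nhds))
    have l2 : Filter.Tendsto (fun k => ‖mulE A (u (φ k))‖) Filter.atTop (nhds ‖mulE A x‖) :=
      (hcontA.tendsto x).comp hconv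
    have := le_of_tendsto_of_tendsto' l1 l2 (fun k => f1 (φ k))
    simpa using this
  have hxM : x ∈ M₀ A := by
    have : ‖mulE A x‖ = ‖A‖ :=
      le_antisymm (by simpa [hx] using norm_mulE_le A x) hxA
    rw [M₀, Set.mem_setOf_eq, this, hx, mul_one]
  have hgx : (⟪mulE A x, mulE B x⟫_ℂ).re ≤ 0 := by
    have l1 : Filter.Tendsto (fun k => (⟪mulE A (u (φ k)), mulE B (u (φ k))⟫_ℂ).re)
        Filter.atTop (nhds ((⟪mulE A x, mulE B x⟫_ℂ).re)) :=
      (hg.tendsto x).comp hconv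
    have l2 : Filter.Tendsto (fun k => t (φ k) * ‖B‖ ^ 2 / 2) Filter.atTop (nhds (0 * ‖B‖ ^ 2 / 2)) :=
      (htend.mul tendsto_const_nhds).div_const 2
    have := le_of_tendsto_of_tendsto' l1 l2 (fun k => f2 (φ k))
    simpa using this
  exact absurd (h x hx hxM) (not_lt.mpr hgx)

lemma mulE_symm (S : EuclideanSpace ℂ (Fin n) →L[ℂ] EuclideanSpace ℂ (Fin n))
    (v : EuclideanSpace ℂ (Fin n)) :
    mulE ((Matrix.toEuclideanCLM (𝕜 := ℂ) (n := Fin n)).symm S) v = S v := by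
  rw [mulE, StarAlgEquiv.apply_symm_apply]

lemma mulE_zero_vec : mulE A (0 : EuclideanSpace ℂ (Fin n)) = 0 := by
  simp [mulE]

lemma bj_smul {A B : Matrix (Fin n) (Fin n) ℂ} (μ : ℂ) (h : BJ A B) : BJ A (μ • B) := by
  intro c
  rw [smul_smul]
  exact h (c * μ)

lemma zero_mem_M₀ : (0 : EuclideanSpace ℂ (Fin n)) ∈ M₀ A := by
  rw [M₀, Set.mem_setOf_eq, mulE_zero_vec]
  simp

lemma inner_unit_self {u : EuclideanSpace ℂ (Fin n)} (hu : ‖u‖ = 1) : ⟪u, u⟫_ℂ = 1 := by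
  rw [inner_self_eq_norm_sq_to_K (𝕜 := ℂ), hu]
  norm_num

lemma part1 {A₁ A₂ : Matrix (Fin n) (Fin n) ℂ} (h₂ : A₂ ≠ 0)
    (hsub : ∀ B, BJ A₁ B → BJ A₂ B) : M₀ A₁ ⊆ M₀ A₂ := by
  have hn : n ≠ 0 := by
    rintro rfl
    exact h₂ (Subsingleton.elim _ _)
  -- reduce to unit vectors
  suffices hunit : ∀ u : EuclideanSpace ℂ (Fin n), ‖u‖ = 1 → u ∈ M₀ A₁ → u ∈ M₀ A₂ by
    intro u hu
    rcases eq_or_ne u 0 with rfl | hu0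
    · exact zero_mem_M₀ A₂
    · have hnorm : (0:ℝ) < ‖u‖ := norm_pos_iff.mpr hu0
      have h1 : ((‖u‖⁻¹ : ℝ) : ℂ) • u ∈ M₀ A₁ := M₀_smul_mem A₁ _ hu
      have h2 : ‖((‖u‖⁻¹ : ℝ) : ℂ) • u‖ = 1 := by
        rw [norm_smul, Complex.norm_real, Real.norm_eq_abs, abs_of_pos (by positivity)]
        field_simp
      have h3 := hunit _ h2 h1
      have h4 := M₀_smul_mem A₂ ((‖u‖ : ℝ) : ℂ) h3
      have : ((‖u‖ : ℝ) : ℂ) • (((‖u‖⁻¹ : ℝ) : ℂ) • u) = u := by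
        rw [smul_smul, ← Complex.ofReal_mul, mul_inv_cancel₀ (ne_of_gt hnorm)]
        simp
      rwa [this] at h4
  intro u hu hu1
  by_contra hu2
  have hA2u : ‖mulE A₂ u‖ < ‖A₂‖ := by
    rcases lt_or_eq_of_le (by simpa [hu] using norm_mulE_le A₂ u) with h | h
    · exact h
    · exact absurd (by rw [M₀, Set.mem_setOf_eq, h, hu, mul_one]) hu2
  -- build B
  set T₂ := Matrix.toEuclideanCLM (𝕜 := ℂ) A₂ with hT₂
  set P : EuclideanSpace ℂ (Fin n) →L[ℂ] EuclideanSpace ℂ (Fin n) :=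
    (innerSL ℂ u).smulRight u with hP
  set B := (Matrix.toEuclideanCLM (𝕜 := ℂ) (n := Fin n)).symm
    (T₂ ∘L (ContinuousLinearMap.id ℂ _ - P)) with hB
  have hBv : ∀ v, mulE B v = mulE A₂ v - ⟪u, v⟫_ℂ • mulE A₂ u := by
    intro v
    rw [hB, mulE_symm]
    have hPv : P v = ⟪u, v⟫_ℂ • u := rfl
    simp only [ContinuousLinearMap.comp_apply, ContinuousLinearMap.sub_apply,
      ContinuousLinearMap.id_apply, map_sub, hPv, map_smul]
    rfl
  have hBJ1 : BJ A₁ B := by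
    apply bj_of_exists
    refine ⟨u, hu, hu1, ?_⟩
    rw [hBv u, inner_unit_self hu, one_smul, sub_self, inner_zero_right]
  have hBJ2 := hsub B hBJ1
  refine not_bj h₂ (fun v hv hv2 => ?_) hBJ2
  rw [hBv v]
  have hA2v : ‖mulE A₂ v‖ = ‖A₂‖ := by
    rw [M₀, Set.mem_setOf_eq] at hv2
    rw [hv2, hv, mul_one]
  have e1 : (⟪mulE A₂ v, mulE A₂ v - ⟪u, v⟫_ℂ • mulE A₂ u⟫_ℂ).re
      = ‖A₂‖ ^ 2 - (⟪u, v⟫_ℂ * ⟪mulE A₂ v, mulE A₂ u⟫_ℂ).re := by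
    rw [inner_sub_right, inner_smul_right, Complex.sub_re, re_inner_self, hA2v]
  rw [e1]
  have e2 : ‖⟪u, v⟫_ℂ * ⟪mulE A₂ v, mulE A₂ u⟫_ℂ‖ ≤ ‖A₂‖ * ‖mulE A₂ u‖ := by
    rw [norm_mul]
    calc ‖⟪u, v⟫_ℂ‖ * ‖⟪mulE A₂ v, mulE A₂ u⟫_ℂ‖
        ≤ (‖u‖ * ‖v‖) * (‖mulE A₂ v‖ * ‖mulE A₂ u‖) := by
          apply mul_le_mul (norm_inner_le_norm _ _) (norm_inner_le_norm _ _)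
            (norm_nonneg _) (by positivity)
      _ = ‖A₂‖ * ‖mulE A₂ u‖ := by rw [hu, hv, hA2v]; ring
  have e3 : (⟪u, v⟫_ℂ * ⟪mulE A₂ v, mulE A₂ u⟫_ℂ).re ≤ ‖A₂‖ * ‖mulE A₂ u‖ :=
    le_trans (Complex.re_le_norm _) e2
  have hA2pos : (0:ℝ) < ‖A₂‖ := norm_pos_iff.mpr h₂
  nlinarith [hA2u, hA2pos]

set_option maxHeartbeats 2000000 in
lemma part2 {A₁ A₂ : Matrix (Fin n) (Fin n) ℂ} (h₁ : A₁ ≠ 0) (h₂ : A₂ ≠ 0)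
    (hsub : ∀ B, BJ A₁ B → BJ A₂ B) :
    ∀ u : EuclideanSpace ℂ (Fin n), ‖u‖ = 1 → u ∈ M₀ A₁ →
      ∃ β : ℂ, β ≠ 0 ∧ mulE A₁ u = β • mulE A₂ u := by
  have hM₀ : M₀ A₁ ⊆ M₀ A₂ := part1 h₂ hsub
  have hA1pos : (0:ℝ) < ‖A₁‖ := norm_pos_iff.mpr h₁
  have hA2pos : (0:ℝ) < ‖A₂‖ := norm_pos_iff.mpr h₂
  intro u hu hu1
  have hu2 : u ∈ M₀ A₂ := hM₀ hu1
  have hA1u : ‖mulE A₁ u‖ = ‖A₁‖ := by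
    rw [M₀, Set.mem_setOf_eq] at hu1; rw [hu1, hu, mul_one]
  have hA2u : ‖mulE A₂ u‖ = ‖A₂‖ := by
    rw [M₀, Set.mem_setOf_eq] at hu2; rw [hu2, hu, mul_one]
  have hA1u0 : mulE A₁ u ≠ 0 := by
    intro h0; rw [h0, norm_zero] at hA1u; exact absurd hA1u.symm (ne_of_gt hA1pos)
  have hA2u0 : mulE A₂ u ≠ 0 := by
    intro h0; rw [h0, norm_zero] at hA2u; exact absurd hA2u.symm (ne_of_gt hA2pos)
  set γ : ℂ := ⟪mulE A₁ u, mulE A₂ u⟫_ℂ / ((‖A₁‖ ^ 2 : ℝ) : ℂ) with hγ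
  set w : EuclideanSpace ℂ (Fin n) := mulE A₂ u - γ • mulE A₁ u with hw
  have hperp : ⟪mulE A₁ u, w⟫_ℂ = 0 := by
    rw [hw, inner_sub_right, inner_smul_right, hγ, inner_self_eq_norm_sq_to_K (𝕜 := ℂ), hA1u]
    have : ((‖A₁‖ : ℂ)) ^ 2 ≠ 0 := by
      norm_cast
      positivity
    field_simp
    push_cast
    simp [this]
  have hw0 : w = 0 := by
    by_contra hwne
    set K : ℝ := ‖w‖ with hK
    have hKpos : (0:ℝ) < K := norm_pos_iff.mpr hwne
    set s : ℝ := K ^ 2 with hs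
    have hspos : (0:ℝ) < s := by positivity
    have hinner_w : ⟪mulE A₂ u, w⟫_ℂ = ((s : ℝ) : ℂ) := by
      have : ⟪w, w⟫_ℂ = ⟪mulE A₂ u, w⟫_ℂ - (starRingEnd ℂ) γ * ⟪mulE A₁ u, w⟫_ℂ := by
        rw [hw, inner_sub_left, inner_smul_left]
      rw [hperp, mul_zero, sub_zero] at this
      rw [← this, inner_self_eq_norm_sq_to_K (𝕜 := ℂ), ← hK, hs]
      norm_cast
    set M : ℝ := ‖A₂‖ with hM
    set c : ℝ := (s + (M * K) ^ 2 / (2 * s)) / M ^ 2 with hc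
    have hcpos : (0:ℝ) < c := by positivity
    set T₂ := Matrix.toEuclideanCLM (𝕜 := ℂ) A₂ with hT₂
    set P : EuclideanSpace ℂ (Fin n) →L[ℂ] EuclideanSpace ℂ (Fin n) :=
      (innerSL ℂ u).smulRight u with hP
    set B := (Matrix.toEuclideanCLM (𝕜 := ℂ) (n := Fin n)).symm
      ((innerSL ℂ u).smulRight w + ((c : ℝ) : ℂ) • (T₂ ∘L (ContinuousLinearMap.id ℂ _ - P)))
      with hB
    have hBv : ∀ v, mulE B v
        = ⟪u, v⟫_ℂ • w + ((c : ℝ) : ℂ) • (mulE A₂ v - ⟪u, v⟫_ℂ • mulE A₂ u) := by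
      intro v
      rw [hB, mulE_symm]
      have hPv : P v = ⟪u, v⟫_ℂ • u := rfl
      simp only [ContinuousLinearMap.add_apply, ContinuousLinearMap.smul_apply,
        ContinuousLinearMap.comp_apply, ContinuousLinearMap.sub_apply,
        ContinuousLinearMap.id_apply, map_sub, hPv, map_smul,
        ContinuousLinearMap.smulRight_apply, innerSL_apply_apply]
      rfl
    have hBJ1 : BJ A₁ B := by
      apply bj_of_exists
      refine ⟨u, hu, hu1, ?_⟩
      rw [hBv u, inner_unit_self hu]
      simp [inner_add_right, inner_smul_right, hperp]
    have hBJ2 := hsub B hBJ1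
    refine not_bj h₂ (fun v hv hv2 => ?_) hBJ2
    -- the estimate
    have hA2v : ‖mulE A₂ v‖ = M := by
      rw [M₀, Set.mem_setOf_eq] at hv2; rw [hv2, hv, mul_one]
    set τ : ℂ := ⟪u, v⟫_ℂ with hτ
    set p : EuclideanSpace ℂ (Fin n) := v - τ • u with hp
    have hup : ⟪u, p⟫_ℂ = 0 := by
      rw [hp, inner_sub_right, inner_smul_right, inner_unit_self hu, mul_one, sub_self]
    have hpu : ⟪p, u⟫_ℂ = 0 := by
      rw [← inner_conj_symm, hup, map_zero]
    have hvdecomp : v = τ • u + p := by rw [hp]; abel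
    have hnormv : ‖τ‖ ^ 2 + ‖p‖ ^ 2 = 1 := by
      have : (1:ℝ) = ‖v‖ ^ 2 := by rw [hv]; norm_num
      rw [this, hvdecomp, norm_add_sq (𝕜 := ℂ), inner_smul_left, hup, mul_zero]
      rw [norm_smul]
      simp [hu]
    set x : ℝ := ‖p‖ with hx
    have hxnn : (0:ℝ) ≤ x := norm_nonneg _
    have hτ1 : ‖τ‖ ≤ 1 := by nlinarith [norm_nonneg τ, sq_nonneg x]
    -- inner products
    have hA2vu : ⟪mulE A₂ v, mulE A₂ u⟫_ℂ = ((M ^ 2 : ℝ) : ℂ) * ⟪v, u⟫_ℂ :=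
      inner_mulE_memM₀ A₂ hu2 v
    have hvu : ⟪v, u⟫_ℂ = (starRingEnd ℂ) τ := by
      rw [← inner_conj_symm, hτ]
    have hA2vw : ⟪mulE A₂ v, w⟫_ℂ = (starRingEnd ℂ) τ * ((s:ℝ):ℂ) + ⟪mulE A₂ p, w⟫_ℂ := by
      rw [hvdecomp, mulE_apply_add, mulE_apply_smul, inner_add_left, inner_smul_left, hinner_w]
    -- main value
    have hval : ⟪mulE A₂ v, mulE B v⟫_ℂ
        = τ * ((starRingEnd ℂ) τ * ((s:ℝ):ℂ) + ⟪mulE A₂ p, w⟫_ℂ)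
          + ((c:ℝ):ℂ) * (((M^2:ℝ):ℂ) - τ * (((M ^ 2 : ℝ) : ℂ) * (starRingEnd ℂ) τ)) := by
      rw [hBv v, inner_add_right]
      have t1 : ⟪mulE A₂ v, τ • w⟫_ℂ = τ * ⟪mulE A₂ v, w⟫_ℂ := inner_smul_right _ _ _
      have t2 : ⟪mulE A₂ v, ((c:ℝ):ℂ) • (mulE A₂ v - τ • mulE A₂ u)⟫_ℂ
          = ((c:ℝ):ℂ) * (((M^2:ℝ):ℂ) - τ * (((M ^ 2 : ℝ) : ℂ) * (starRingEnd ℂ) τ)) := by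
        rw [inner_smul_right, inner_sub_right, inner_smul_right, hA2vu, hvu,
          inner_self_eq_norm_sq_to_K (𝕜 := ℂ), hA2v]
        norm_cast
      rw [t1, t2, hA2vw]
    have hττ : τ * (starRingEnd ℂ) τ = ((‖τ‖ ^ 2 : ℝ) : ℂ) := by
      rw [Complex.mul_conj, Complex.normSq_eq_norm_sq]
    have hFc : ⟪mulE A₂ v, mulE B v⟫_ℂ
        = ((‖τ‖ ^ 2 * s + c * (M ^ 2 * (1 - ‖τ‖ ^ 2)) : ℝ) : ℂ) + τ * ⟪mulE A₂ p, w⟫_ℂ := by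
      rw [hval]
      push_cast at hττ ⊢
      linear_combination ((s : ℂ) - (c : ℂ) * ((M : ℂ)) ^ 2) * hττ
    have hFre : (⟪mulE A₂ v, mulE B v⟫_ℂ).re
        = ‖τ‖ ^ 2 * s + c * (M ^ 2 * (1 - ‖τ‖ ^ 2)) + (τ * ⟪mulE A₂ p, w⟫_ℂ).re := by
      rw [hFc, Complex.add_re, Complex.ofReal_re]
    have hbound : ‖τ * ⟪mulE A₂ p, w⟫_ℂ‖ ≤ M * K * x := by
      rw [norm_mul]
      have b1 : ‖⟪mulE A₂ p, w⟫_ℂ‖ ≤ (M * x) * K := by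
        calc ‖⟪mulE A₂ p, w⟫_ℂ‖ ≤ ‖mulE A₂ p‖ * ‖w‖ := norm_inner_le_norm _ _
          _ ≤ (M * x) * K := by
              apply mul_le_mul_of_nonneg_right _ (norm_nonneg w) |>.trans
              · rw [hK]
              · exact norm_mulE_le A₂ p
      calc ‖τ‖ * ‖⟪mulE A₂ p, w⟫_ℂ‖ ≤ 1 * ((M * x) * K) :=
            mul_le_mul hτ1 b1 (norm_nonneg _) zero_le_one
        _ = M * K * x := by ring
    have hreb : -(M * K * x) ≤ (τ * ⟪mulE A₂ p, w⟫_ℂ).re := by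
      have h1 := Complex.abs_re_le_norm (τ * ⟪mulE A₂ p, w⟫_ℂ)
      have h2 := neg_abs_le ((τ * ⟪mulE A₂ p, w⟫_ℂ).re)
      linarith
    have hτx : ‖τ‖ ^ 2 = 1 - x ^ 2 := by linarith
    have hcM2 : c * M ^ 2 = s + (M * K) ^ 2 / (2 * s) := by
      rw [hc]
      field_simp
    set d : ℝ := (M * K) ^ 2 / (2 * s) with hd
    have hdx : d * x ^ 2 * (2 * s) = (M * K * x) ^ 2 := by
      rw [hd]
      field_simp
    have hcMx : c * (M ^ 2 * x ^ 2) = s * x ^ 2 + d * x ^ 2 := by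
      linear_combination x ^ 2 * hcM2
    rw [hFre, hτx]
    nlinarith [hcMx, hdx, sq_nonneg (s - M * K * x), hspos, hreb, sq_nonneg x]
  -- conclude from w = 0
  have hA2u_eq : mulE A₂ u = γ • mulE A₁ u := by
    have := hw0
    rw [hw, sub_eq_zero] at this
    exact this
  have hγ0 : γ ≠ 0 := by
    intro h0
    rw [h0, zero_smul] at hA2u_eq
    exact hA2u0 hA2u_eq
  refine ⟨γ⁻¹, inv_ne_zero hγ0, ?_⟩
  rw [hA2u_eq, smul_smul, inv_mul_cancel₀ hγ0, one_smul]

lemma mulE_apply_sub (u v : EuclideanSpace ℂ (Fin n)) :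
    mulE A (u - v) = mulE A u - mulE A v := by simp [mulE]

lemma M₀_norm_smul_unit {A : Matrix (Fin n) (Fin n) ℂ} {u : EuclideanSpace ℂ (Fin n)}
    (hu0 : u ≠ 0) (hu : u ∈ M₀ A) :
    ((‖u‖⁻¹ : ℝ) : ℂ) • u ∈ M₀ A ∧ ‖((‖u‖⁻¹ : ℝ) : ℂ) • u‖ = 1 := by
  have hnorm : (0:ℝ) < ‖u‖ := norm_pos_iff.mpr hu0
  refine ⟨M₀_smul_mem A _ hu, ?_⟩
  rw [norm_smul, Complex.norm_real, Real.norm_eq_abs, abs_of_pos (by positivity)]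
  field_simp

lemma forward {A₁ A₂ : Matrix (Fin n) (Fin n) ℂ} (h₁ : A₁ ≠ 0) (h₂ : A₂ ≠ 0)
    (hsub : ∀ B, BJ A₁ B → BJ A₂ B) :
    M₀ A₁ ⊆ M₀ A₂ ∧ ∃ α : ℂ, α ≠ 0 ∧ ∀ u ∈ M₀ A₁, mulE A₁ u = α • mulE A₂ u := by
  have hn : n ≠ 0 := by rintro rfl; exact h₁ (Subsingleton.elim _ _)
  have hM₀ := part1 h₂ hsub
  have hcol := part2 h₁ h₂ hsub
  have hA1pos : (0:ℝ) < ‖A₁‖ := norm_pos_iff.mpr h₁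
  obtain ⟨u₀, hu₀n, hu₀a⟩ := exists_unit_attain A₁ hn
  have hu₀ : u₀ ∈ M₀ A₁ := by
    rw [M₀, Set.mem_setOf_eq, hu₀a, hu₀n, mul_one]
  have hu₀0 : u₀ ≠ 0 := by
    intro h0; rw [h0, norm_zero] at hu₀n; norm_num at hu₀n
  obtain ⟨α, hα, hu₀eq⟩ := hcol u₀ hu₀n hu₀
  refine ⟨hM₀, α, hα, ?_⟩
  have hA1_inj : ∀ y ∈ M₀ A₁, mulE A₁ y = 0 → y = 0 := by
    intro y hy h0
    rw [M₀, Set.mem_setOf_eq, h0, norm_zero] at hy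
    have := (mul_eq_zero.mp hy.symm).resolve_left (ne_of_gt hA1pos)
    exact norm_eq_zero.mp this
  have hunit : ∀ u : EuclideanSpace ℂ (Fin n), ‖u‖ = 1 → u ∈ M₀ A₁ →
      mulE A₁ u = α • mulE A₂ u := by
    intro u hu hu1
    by_cases hdep : ∃ ch : ℂ, u = ch • u₀
    · obtain ⟨ch, rfl⟩ := hdep
      rw [mulE_apply_smul, mulE_apply_smul, hu₀eq, smul_comm]
    · obtain ⟨β, hβ, hueq⟩ := hcol u hu hu1
      set z : EuclideanSpace ℂ (Fin n) := u + u₀ with hzdef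
      have hzM : z ∈ M₀ A₁ := M₀_add_mem _ hu1 hu₀
      have hz0 : z ≠ 0 := by
        intro h0
        exact hdep ⟨-1, by rw [neg_smul, one_smul, eq_neg_iff_add_eq_zero]; exact h0⟩
      obtain ⟨hzM', hznorm⟩ := M₀_norm_smul_unit hz0 hzM
      obtain ⟨δ, hδ, hzeq'⟩ := hcol _ hznorm hzM'
      have hzeq : mulE A₁ z = δ • mulE A₂ z := by
        rw [mulE_apply_smul, mulE_apply_smul] at hzeq'
        have hc0 : ((‖z‖⁻¹ : ℝ) : ℂ) ≠ 0 := by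
          simp [norm_eq_zero, hz0]
        rw [smul_comm] at hzeq'
        exact smul_right_injective _ hc0 hzeq'
      have hA2u : mulE A₂ u = β⁻¹ • mulE A₁ u := by
        rw [hueq, smul_smul, inv_mul_cancel₀ hβ, one_smul]
      have hA2u₀ : mulE A₂ u₀ = α⁻¹ • mulE A₁ u₀ := by
        rw [hu₀eq, smul_smul, inv_mul_cancel₀ hα, one_smul]
      have hrel : (β - δ) • mulE A₂ u - (δ - α) • mulE A₂ u₀ = 0 := by
        have e1 : mulE A₁ z = mulE A₁ u + mulE A₁ u₀ := mulE_apply_add _ _ _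
        have e2 : mulE A₂ z = mulE A₂ u + mulE A₂ u₀ := mulE_apply_add _ _ _
        rw [e1, e2, hueq, hu₀eq] at hzeq
        rw [smul_add] at hzeq
        rw [sub_smul, sub_smul]
        abel_nf
        abel_nf at hzeq
        linear_combination (norm := module) hzeq
      set y : EuclideanSpace ℂ (Fin n) :=
        ((β - δ) * β⁻¹) • u - ((δ - α) * α⁻¹) • u₀ with hy
      have hyM : y ∈ M₀ A₁ := by
        rw [hy, sub_eq_add_neg, ← neg_smul]
        exact M₀_add_mem _ (M₀_smul_mem _ _ hu1) (M₀_smul_mem _ _ hu₀)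
      have hyzero : mulE A₁ y = 0 := by
        rw [hy, mulE_apply_sub, mulE_apply_smul, mulE_apply_smul, hueq, hu₀eq]
        rw [smul_smul, smul_smul]
        have c1 : (β - δ) * β⁻¹ * β = β - δ := by field_simp
        have c2 : (δ - α) * α⁻¹ * α = δ - α := by field_simp
        rw [c1, c2]
        exact hrel
      have hy0 : y = 0 := hA1_inj y hyM hyzero
      rw [hy, sub_eq_zero] at hy0
      have hβδ : β = δ := by
        by_contra hne
        apply hdep
        have hcoef : ((β - δ) * β⁻¹) ≠ 0 :=
          mul_ne_zero (sub_ne_zero.mpr hne) (inv_ne_zero hβ)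
        refine ⟨((β - δ) * β⁻¹)⁻¹ * ((δ - α) * α⁻¹), ?_⟩
        rw [mul_smul, ← hy0, smul_smul, inv_mul_cancel₀ hcoef, one_smul]
      have hδα : δ = α := by
        have h0 : ((δ - α) * α⁻¹) • u₀ = 0 := by
          rw [← hy0, hβδ, sub_self, zero_mul, zero_smul]
        rcases smul_eq_zero.mp h0 with h | h
        · rcases mul_eq_zero.mp h with h' | h'
          · exact sub_eq_zero.mp h'
          · exact absurd h' (inv_ne_zero hα)
        · exact absurd h hu₀0
      rw [hueq, hβδ, hδα]
  intro u huM
  rcases eq_or_ne u 0 with rfl | hu0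
  · rw [mulE_zero_vec, mulE_zero_vec, smul_zero]
  · obtain ⟨hM, hN⟩ := M₀_norm_smul_unit hu0 huM
    have := hunit _ hN hM
    rw [mulE_apply_smul, mulE_apply_smul, smul_comm] at this
    have hc0 : ((‖u‖⁻¹ : ℝ) : ℂ) ≠ 0 := by simp [norm_eq_zero, hu0]
    exact smul_right_injective _ hc0 this

lemma backward {A₁ A₂ : Matrix (Fin n) (Fin n) ℂ} (h₁ : A₁ ≠ 0)
    (hM : M₀ A₁ ⊆ M₀ A₂) {α : ℂ} (hα : α ≠ 0)
    (hprop : ∀ u ∈ M₀ A₁, mulE A₁ u = α • mulE A₂ u) :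
    ∀ B, BJ A₁ B → BJ A₂ B := by
  intro B hB
  by_contra hnot
  rw [BJ] at hnot
  push_neg at hnot
  obtain ⟨c, hc⟩ := hnot
  have hc0 : c ≠ 0 := by
    rintro rfl
    rw [zero_smul, add_zero] at hc
    exact lt_irrefl _ hc
  have hpt : ∀ v, ‖v‖ = 1 → v ∈ M₀ A₂ → (c * ⟪mulE A₂ v, mulE B v⟫_ℂ).re < 0 := by
    intro v hv hv2
    have hA2v : ‖mulE A₂ v‖ = ‖A₂‖ := by
      rw [M₀, Set.mem_setOf_eq] at hv2; rw [hv2, hv, mul_one]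
    have h1 : ‖mulE (A₂ + c • B) v‖ ≤ ‖A₂ + c • B‖ := by
      simpa [hv] using norm_mulE_le (A₂ + c • B) v
    have h2 : ‖mulE (A₂ + c • B) v‖ < ‖mulE A₂ v‖ := by
      rw [hA2v]; linarith
    have he : mulE (A₂ + c • B) v = mulE A₂ v + c • mulE B v := by
      rw [mulE_add, mulE_smul]
    have h3 : ‖mulE A₂ v + c • mulE B v‖ ^ 2 < ‖mulE A₂ v‖ ^ 2 := by
      rw [← he]
      nlinarith [norm_nonneg (mulE (A₂ + c • B) v), norm_nonneg (mulE A₂ v)]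
    rw [norm_add_sq (𝕜 := ℂ), inner_smul_right] at h3
    simp only [RCLike.re_to_complex] at h3
    nlinarith [sq_nonneg ‖c • mulE B v‖]
  set μ : ℂ := -(c * ((starRingEnd ℂ) α)⁻¹) with hμ
  have hconj0 : (starRingEnd ℂ) α ≠ 0 := by
    simp [hα]
  refine not_bj h₁ (fun v hv hv1 => ?_) (bj_smul μ hB)
  have hv2 := hM hv1
  have hpt' := hpt v hv hv2
  have he : ⟪mulE A₁ v, mulE (μ • B) v⟫_ℂ
      = (μ * (starRingEnd ℂ) α) * ⟪mulE A₂ v, mulE B v⟫_ℂ := by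
    rw [mulE_smul, inner_smul_right, hprop v hv1, inner_smul_left]
    ring
  have hμα : μ * (starRingEnd ℂ) α = -c := by
    rw [hμ]
    field_simp
  rw [he, hμα]
  have : -c * ⟪mulE A₂ v, mulE B v⟫_ℂ = -(c * ⟪mulE A₂ v, mulE B v⟫_ℂ) := by ring
  rw [this, Complex.neg_re]
  linarith

end basic


theorem orthSet_subset_iff {n : ℕ} (A₁ A₂ : Matrix (Fin n) (Fin n) ℂ)
    (h₁ : A₁ ≠ 0) (h₂ : A₂ ≠ 0) :
    orthSet A₁ ⊆ orthSet A₂ ↔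
      (M₀ A₁ ⊆ M₀ A₂ ∧ ∃ α : ℂ, α ≠ 0 ∧ ∀ u ∈ M₀ A₁, mulE A₁ u = α • mulE A₂ u) := by
  constructor
  · intro hsub
    exact forward h₁ h₂ (fun B hB => hsub hB)
  · rintro ⟨hM, α, hα, hprop⟩
    intro B hB
    exact backward h₁ hM hα hprop B hB
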